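/- Let N ≥ 1, let y_1, …, y_N be distinct points in ℝ², and let a = (a_1, …, a_N) ∈ ℝ^N satisfy Σ_{j=1}^N a_j = 0 and Σ_{j=1}^N a_j y_j = 0 (as a vector in ℝ²). Then the function ψ(x) = −(2π)^{-1} Σ_{j=1}^N a_j log|x − y_j| (defined for x ∉ {y_1, …, y_N}) belongs to L²(ℝ²), and there exist C > 0 and R > 0 such that |ψ(x)| ≤ C/|x|² for all |x| ≥ R. -/

import Mathlib

open Real MeasureTheory Set Metric


noncomputable section

abbrev E2 := EuclideanSpace ℝ (Fin 2)

lemma log_sq_le (t : ℝ) (h0 : 0 < t) (h1 : t ≤ 1) :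
    (Real.log t)^2 ≤ 48 * t ^ ((-1:ℝ)/2) := by
  set s := -Real.log t with hs
  have hs0 : 0 ≤ s := by
    have := Real.log_nonpos h0.le h1; simp [hs]; linarith
  have hrw : t ^ ((-1:ℝ)/2) = Real.exp (s/2) := by
    rw [Real.rpow_def_of_pos h0, hs]; ring_nf
  have h2 : Real.exp (s/2) = Real.exp (s/4) * Real.exp (s/4) := by
    rw [← Real.exp_add]; ring_nf
  have h3 : s/4 + 1 ≤ Real.exp (s/4) := Real.add_one_le_exp _
  have h4 : (s/4)^2 ≤ Real.exp (s/4) * Real.exp (s/4) := by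
    nlinarith [Real.exp_pos (s/4)]
  have : (Real.log t)^2 = s^2 := by rw [hs]; ring
  rw [this, hrw, h2]
  nlinarith

lemma meas_logsq_abs : Measurable (fun a : ℝ => (Real.log |a|)^2) :=
  (Real.measurable_log.comp continuous_abs.measurable).pow_const 2

lemma L1d : IntegrableOn (fun a : ℝ => (Real.log |a|)^2) (Icc (-1) 1) volume := by
  have hpos : IntegrableOn (fun a : ℝ => (Real.log |a|)^2) (Icc 0 1) volume := by
    have hg : IntegrableOn (fun a : ℝ => 48 * a ^ ((-1:ℝ)/2)) (Icc 0 1) volume := by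
      rw [integrableOn_Icc_iff_integrableOn_Ioc]
      exact ((intervalIntegrable_iff_integrableOn_Ioc_of_le (by norm_num)).1
        (intervalIntegral.intervalIntegrable_rpow' (by norm_num))).const_mul 48
    refine Integrable.mono' hg meas_logsq_abs.aestronglyMeasurable ?_
    refine (ae_restrict_iff' measurableSet_Icc).2 (Filter.Eventually.of_forall ?_)
    intro a ha
    rcases eq_or_lt_of_le ha.1 with h | h
    · simp [← h]
    · have : |a| = a := abs_of_pos h
      rw [Real.norm_eq_abs, abs_of_nonneg (sq_nonneg _), this]
      exact log_sq_le a h ha.2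
  have hneg : IntegrableOn (fun a : ℝ => (Real.log |a|)^2) (Icc (-1) 0) volume := by
    have hpre : (Neg.neg ⁻¹' (Icc (-1:ℝ) 0)) = Icc 0 1 := by
      ext a; simp only [mem_preimage, mem_Icc]; constructor <;> intro h <;> constructor <;> linarith [h.1, h.2]
    have := (Measure.measurePreserving_neg (volume : Measure ℝ)).integrableOn_comp_preimage
      (Homeomorph.neg ℝ).measurableEmbedding (s := Icc (-1) 0)
      (f := fun a : ℝ => (Real.log |a|)^2)
    rw [hpre] at this
    rw [← this]
    have : ((fun a : ℝ => (Real.log |a|)^2) ∘ Neg.neg) = (fun a : ℝ => (Real.log |a|)^2) := by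
      ext a; simp
    rw [this]; exact hpos
  refine (hneg.union hpos).mono_set ?_
  intro a ha
  rcases le_total a 0 with h | h
  · exact Or.inl ⟨ha.1, h⟩
  · exact Or.inr ⟨h, ha.2⟩

lemma L2d_prod : IntegrableOn (fun p : ℝ × ℝ => (Real.log (Real.sqrt (p.1^2 + p.2^2)))^2)
    ((Icc (-1:ℝ) 1) ×ˢ (Icc (-1:ℝ) 1)) volume := by
  set S : Set (ℝ × ℝ) := (Icc (-1:ℝ) 1) ×ˢ (Icc (-1:ℝ) 1) with hS
  have hSm : MeasurableSet S := (measurableSet_Icc).prod measurableSet_Icc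
  have hmeas : Measurable (fun p : ℝ × ℝ => (Real.log (Real.sqrt (p.1^2 + p.2^2)))^2) := by
    apply Measurable.pow_const
    exact Real.measurable_log.comp ((measurable_fst.pow_const 2).add (measurable_snd.pow_const 2)).sqrt
  have hG : IntegrableOn (fun p : ℝ × ℝ => (Real.log |p.1|)^2 + 1) S volume := by
    apply Integrable.add
    · rw [hS, Measure.volume_eq_prod, ← Measure.prod_restrict]
      have := L1d.mul_prod (integrable_const (1:ℝ) (μ := volume.restrict (Icc (-1:ℝ) 1)))
      simpa using this
    · refine integrableOn_const (lt_top_iff_ne_top.1 ?_)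
      rw [hS, Measure.volume_eq_prod, Measure.prod_prod]
      simp [Real.volume_Icc]
      norm_num
  refine Integrable.mono' hG hmeas.aestronglyMeasurable ?_
  have hZ : (volume : Measure (ℝ × ℝ)) {p | p.1 = 0} = 0 := by
    have : {p : ℝ × ℝ | p.1 = 0} = ({0} : Set ℝ) ×ˢ (univ : Set ℝ) := by
      ext ⟨a, b⟩; simp [Set.mem_prod, eq_comm]
    rw [this, Measure.volume_eq_prod, Measure.prod_prod]
    simp
  have h0 : ∀ᵐ p ∂(volume.restrict S), p.1 ≠ 0 :=
    ae_restrict_of_ae (by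
      have := measure_eq_zero_iff_ae_notMem.mp hZ
      filter_upwards [this] with p hp
      simpa using hp)
  filter_upwards [h0, ae_restrict_mem hSm] with p hp1 hpS
  set u := Real.sqrt (p.1^2 + p.2^2) with hu
  have h1le : |p.1| ≤ u := by
    rw [hu, ← Real.sqrt_sq_eq_abs]
    exact Real.sqrt_le_sqrt (by nlinarith [sq_nonneg p.2])
  have hu2 : u ≤ 2 := by
    rw [hu]
    have : p.1^2 + p.2^2 ≤ 4 := by
      rcases hpS with ⟨h1, h2⟩
      simp only [mem_Icc] at h1 h2
      nlinarith [h1.1, h1.2, h2.1, h2.2]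
    calc Real.sqrt (p.1^2+p.2^2) ≤ Real.sqrt 4 := Real.sqrt_le_sqrt this
      _ = 2 := by rw [show (4:ℝ) = 2^2 by norm_num, Real.sqrt_sq (by norm_num)]
  have hu0 : 0 < u := lt_of_lt_of_le (abs_pos.2 hp1) h1le
  rw [Real.norm_eq_abs, abs_of_nonneg (sq_nonneg _)]
  rcases le_total u 1 with hc | hc
  · have hlogu : Real.log u ≤ 0 := Real.log_nonpos hu0.le hc
    have hlogp : Real.log (|p.1|) ≤ Real.log u := Real.log_le_log (abs_pos.2 hp1) h1le
    nlinarith [hlogp, hlogu, sq_nonneg (Real.log u + Real.log (|p.1|)), sq_nonneg (Real.log u - Real.log (|p.1|))]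
  · have h1 : 0 ≤ Real.log u := Real.log_nonneg hc
    have h2 : Real.log u ≤ Real.log 2 := Real.log_le_log hu0 hu2
    have h3 : Real.log 2 ≤ 1 := by
      calc Real.log 2 ≤ Real.log (Real.exp 1) := Real.log_le_log (by norm_num)
            (by nlinarith [Real.add_one_le_exp (1:ℝ)])
        _ = 1 := Real.log_exp 1
    have : (Real.log u)^2 ≤ 1 := by nlinarith
    nlinarith [sq_nonneg (Real.log (|p.1|))]

lemma L2d_complex : IntegrableOn (fun z : ℂ => (Real.log ‖z‖)^2) (closedBall 0 1) volume := by
  have key := (Complex.volume_preserving_equiv_real_prod).integrableOn_comp_preimage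
    Complex.measurableEquivRealProd.measurableEmbedding
    (s := (Icc (-1:ℝ) 1) ×ˢ (Icc (-1:ℝ) 1))
    (f := fun p : ℝ × ℝ => (Real.log (Real.sqrt (p.1^2 + p.2^2)))^2)
  have h1 : ((fun p : ℝ × ℝ => (Real.log (Real.sqrt (p.1^2 + p.2^2)))^2)
      ∘ Complex.measurableEquivRealProd) = fun z : ℂ => (Real.log ‖z‖)^2 := by
    ext z
    simp only [Function.comp_apply]
    congr 2
    rw [Complex.norm_def, Complex.normSq_apply]
    have : Complex.measurableEquivRealProd z = (z.re, z.im) := rfl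
    rw [this]
    ring_nf
  rw [h1] at key
  refine (key.2 L2d_prod).mono_set ?_
  intro z hz
  simp only [mem_closedBall, dist_zero_right] at hz
  have hre : |z.re| ≤ 1 := (Complex.abs_re_le_norm z).trans hz
  have him : |z.im| ≤ 1 := (Complex.abs_im_le_norm z).trans hz
  have : Complex.measurableEquivRealProd z = (z.re, z.im) := rfl
  simp only [mem_preimage, this, Set.mem_prod, mem_Icc]
  exact ⟨abs_le.1 hre, abs_le.1 him⟩

lemma L2d_E : IntegrableOn (fun x : E2 => (Real.log ‖x‖)^2) (closedBall 0 1) volume := by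
  set L : ℂ ≃ₗᵢ[ℝ] E2 := Complex.orthonormalBasisOneI.repr
  have key := (L.measurePreserving).integrableOn_comp_preimage
    (L.toHomeomorph.measurableEmbedding) (s := closedBall (0:E2) 1)
    (f := fun x : E2 => (Real.log ‖x‖)^2)
  have h1 : ((fun x : E2 => (Real.log ‖x‖)^2) ∘ L) = fun z : ℂ => (Real.log ‖z‖)^2 := by
    ext z; simp [L.norm_map]
  have h2 : (⇑L ⁻¹' closedBall (0:E2) 1) = closedBall 0 1 := by
    ext z
    simp only [mem_preimage, mem_closedBall, dist_zero_right]
    rw [L.norm_map]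
  rw [h1, h2] at key
  exact key.1 L2d_complex

lemma meas_logsq (y : E2) : Measurable (fun x : E2 => (Real.log ‖x - y‖)^2) :=
  (Real.measurable_log.comp (continuous_norm.measurable.comp
    ((continuous_id.sub continuous_const).measurable))).pow_const 2

lemma L2d_ball (y : E2) (r : ℝ) :
    IntegrableOn (fun x : E2 => (Real.log ‖x - y‖)^2) (closedBall 0 r) volume := by
  set M : ℝ := max 1 (r + ‖y‖) with hM
  have hM1 : 1 ≤ M := le_max_left _ _
  have hsub : closedBall (0:E2) r ⊆ closedBall y M := by
    intro x hx
    simp only [mem_closedBall, dist_zero_right] at hx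
    rw [mem_closedBall, dist_eq_norm]
    calc ‖x - y‖ ≤ ‖x‖ + ‖y‖ := norm_sub_le _ _
      _ ≤ r + ‖y‖ := by linarith
      _ ≤ M := le_max_right _ _
  refine IntegrableOn.mono_set ?_ hsub
  have hcover : closedBall y M ⊆ closedBall y 1 ∪ (closedBall y M \ ball y 1) := by
    intro x hx
    by_cases h : x ∈ ball y 1
    · exact Or.inl (ball_subset_closedBall h)
    · exact Or.inr ⟨hx, h⟩
  refine IntegrableOn.mono_set (IntegrableOn.union ?_ ?_) hcover
  · -- translate to 0
    have key := (measurePreserving_add_right (volume : Measure E2) y).integrableOn_comp_preimage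
      (Homeomorph.addRight y).measurableEmbedding (s := closedBall y 1)
      (f := fun x : E2 => (Real.log ‖x - y‖)^2)
    have h1 : ((fun x : E2 => (Real.log ‖x - y‖)^2) ∘ (· + y)) = fun x : E2 => (Real.log ‖x‖)^2 := by
      ext x; simp
    have h2 : ((· + y) ⁻¹' closedBall y 1 : Set E2) = closedBall 0 1 := by
      ext x
      simp [mem_closedBall, dist_eq_norm]
    rw [h1, h2] at key
    exact key.1 L2d_E
  · refine Measure.integrableOn_of_bounded ?_ (meas_logsq y).aestronglyMeasurable
      (M := (Real.log M)^2) ?_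
    · exact ((measure_mono (diff_subset)).trans_lt (measure_closedBall_lt_top)).ne
    · refine (ae_restrict_iff' (measurableSet_closedBall.diff measurableSet_ball)).2
        (Filter.Eventually.of_forall ?_)
      intro x hx
      have h1 : 1 ≤ ‖x - y‖ := by
        have := hx.2
        simp only [mem_ball, dist_eq_norm, not_lt] at this
        exact this
      have h2 : ‖x - y‖ ≤ M := by
        have := hx.1
        rwa [mem_closedBall, dist_eq_norm] at this
      have hl0 : 0 ≤ Real.log ‖x - y‖ := Real.log_nonneg h1
      have hlM : Real.log ‖x - y‖ ≤ Real.log M := Real.log_le_log (by linarith) h2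
      rw [Real.norm_eq_abs, abs_of_nonneg (sq_nonneg _)]
      nlinarith

lemma taylor_log (x y : E2) (h : 6*‖y‖+1 ≤ ‖x‖) :
    |Real.log ‖x - y‖ - Real.log ‖x‖ + (inner ℝ x y : ℝ) / ‖x‖^2| ≤ 10*(‖y‖+1)^2/‖x‖^2 := by
  have hy0 : 0 ≤ ‖y‖ := norm_nonneg y
  have hx1 : 1 ≤ ‖x‖ := by linarith
  have hx0 : 0 < ‖x‖ := by linarith
  have hyx : ‖y‖ < ‖x‖ := by linarith
  have hxy : x - y ≠ 0 := by
    intro hc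
    have : x = y := by rwa [sub_eq_zero] at hc
    rw [this] at hyx; exact lt_irrefl _ hyx
  have hxy0 : 0 < ‖x - y‖ := norm_pos_iff.2 hxy
  set t : ℝ := (‖y‖^2 - 2*(inner ℝ x y : ℝ))/‖x‖^2 with ht
  have hnorm : ‖x - y‖^2 = ‖x‖^2 * (1+t) := by
    rw [ht, @norm_sub_sq_real]
    field_simp
    ring
  have h1t : 0 < 1 + t := by
    by_contra hc
    push_neg at hc
    nlinarith [sq_nonneg ‖x - y‖, hxy0]
  have hinner : |(inner ℝ x y : ℝ)| ≤ ‖x‖ * ‖y‖ := abs_real_inner_le_norm x y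
  have htb : |t| ≤ 3*‖y‖/‖x‖ := by
    rw [ht, abs_div, abs_of_pos (by positivity : (0:ℝ) < ‖x‖^2)]
    rw [div_le_div_iff₀ (by positivity) hx0]
    have h1 : |‖y‖^2 - 2*(inner ℝ x y : ℝ)| ≤ ‖y‖^2 + 2*(‖x‖*‖y‖) := by
      calc |‖y‖^2 - 2*(inner ℝ x y : ℝ)| ≤ |‖y‖^2| + |2*(inner ℝ x y : ℝ)| := abs_sub _ _
        _ = ‖y‖^2 + 2*|(inner ℝ x y : ℝ)| := by rw [abs_of_nonneg (sq_nonneg _), abs_mul]; norm_num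
        _ ≤ ‖y‖^2 + 2*(‖x‖*‖y‖) := by linarith
    have h2 : ‖y‖^2 ≤ ‖x‖*‖y‖ := by nlinarith
    nlinarith
  have ht2 : |t| ≤ 1/2 := by
    refine htb.trans ?_
    rw [div_le_div_iff₀ hx0 (by norm_num : (0:ℝ) < 2)]
    linarith
  have hlog : Real.log ‖x - y‖ = Real.log ‖x‖ + (1/2) * Real.log (1+t) := by
    have e1 : Real.log (‖x - y‖^2) = 2 * Real.log ‖x - y‖ := by
      rw [sq, Real.log_mul hxy0.ne' hxy0.ne']; ring
    have e2 : Real.log (‖x‖^2 * (1+t)) = 2 * Real.log ‖x‖ + Real.log (1+t) := by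
      rw [Real.log_mul (by positivity) h1t.ne', sq, Real.log_mul hx0.ne' hx0.ne']; ring
    have := hnorm ▸ e1
    rw [e2] at this
    linarith
  have hrem : |Real.log (1+t) - t| ≤ 2*t^2 := by
    have habs : |(-t)| < 1 := by rw [abs_neg]; linarith [abs_nonneg t, ht2]
    have := Real.abs_log_sub_add_sum_range_le habs 1
    simp only [Finset.sum_range_one, pow_one] at this
    have e : (1 : ℝ) - (-t) = 1 + t := by ring
    rw [e] at this
    have e2 : |(-t)|^2 = t^2 := by rw [abs_neg, sq_abs]
    rw [e2] at this
    have h3 : (1:ℝ) - |(-t)| ≥ 1/2 := by rw [abs_neg]; linarith [ht2]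
    have h4 : t^2 / (1 - |(-t)|) ≤ 2*t^2 := by
      rw [div_le_iff₀ (by rw [abs_neg]; linarith [ht2, abs_nonneg t])]
      nlinarith [sq_nonneg t, abs_nonneg t]
    have h5 : |(-t)/(0+1) + Real.log (1+t)| = |Real.log (1+t) - t| := by
      congr 1; ring
    calc |Real.log (1+t) - t| = |(-t)/(0+1) + Real.log (1+t)| := h5.symm
      _ ≤ t^2/(1-|(-t)|) := by simpa using this
      _ ≤ 2*t^2 := h4
  have hkey : Real.log ‖x - y‖ - Real.log ‖x‖ + (inner ℝ x y : ℝ)/‖x‖^2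
      = (1/2)*(Real.log (1+t) - t) + ‖y‖^2/(2*‖x‖^2) := by
    rw [hlog, ht]
    field_simp
    ring
  rw [hkey]
  have ht2sq : t^2 ≤ 9*‖y‖^2/‖x‖^2 := by
    have : |t|^2 ≤ (3*‖y‖/‖x‖)^2 := by
      apply pow_le_pow_left₀ (abs_nonneg t) htb
    rw [sq_abs] at this
    calc t^2 ≤ (3*‖y‖/‖x‖)^2 := this
      _ = 9*‖y‖^2/‖x‖^2 := by rw [div_pow]; ring_nf
  have hA : |(1/2)*(Real.log (1+t) - t)| = (1/2)*|Real.log (1+t) - t| := by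
    rw [abs_mul]; norm_num
  have hB : |‖y‖^2/(2*‖x‖^2)| = ‖y‖^2/(2*‖x‖^2) := abs_of_nonneg (by positivity)
  have hcomb : 9*‖y‖^2/‖x‖^2 + ‖y‖^2/(2*‖x‖^2) = (19*‖y‖^2/2)/‖x‖^2 := by
    field_simp; ring
  calc |(1/2)*(Real.log (1+t) - t) + ‖y‖^2/(2*‖x‖^2)|
      ≤ |(1/2)*(Real.log (1+t) - t)| + |‖y‖^2/(2*‖x‖^2)| := abs_add_le _ _
    _ = (1/2)*|Real.log (1+t) - t| + ‖y‖^2/(2*‖x‖^2) := by rw [hA, hB]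
    _ ≤ (1/2)*(2*t^2) + ‖y‖^2/(2*‖x‖^2) := by linarith
    _ = t^2 + ‖y‖^2/(2*‖x‖^2) := by ring
    _ ≤ 9*‖y‖^2/‖x‖^2 + ‖y‖^2/(2*‖x‖^2) := by linarith
    _ = (19*‖y‖^2/2)/‖x‖^2 := hcomb
    _ ≤ 10*(‖y‖+1)^2/‖x‖^2 := by
        gcongr
        nlinarith

lemma sum_decay (N : ℕ) (y : Fin N → E2) (a : Fin N → ℝ)
    (hsum : ∑ j, a j = 0) (hmom : ∑ j, a j • y j = 0) :
    ∀ x : E2, (1 + ∑ j, 6*‖y j‖) ≤ ‖x‖ →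
      |∑ j, a j * Real.log ‖x - y j‖| ≤ (∑ j, |a j| * (10*(‖y j‖+1)^2)) / ‖x‖^2 := by
  intro x hx
  have hsumyn : (0:ℝ) ≤ ∑ j, 6*‖y j‖ := Finset.sum_nonneg (fun j _ => by positivity)
  have hx0 : 0 < ‖x‖ := lt_of_lt_of_le (by linarith) hx
  have hxj : ∀ j, 6*‖y j‖+1 ≤ ‖x‖ := by
    intro j
    have := Finset.single_le_sum (f := fun j => 6*‖y j‖) (fun i _ => by positivity)
      (Finset.mem_univ j)
    linarith
  have hrw : ∑ j, a j * Real.log ‖x - y j‖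
      = ∑ j, a j * (Real.log ‖x - y j‖ - Real.log ‖x‖ + (inner ℝ x (y j) : ℝ)/‖x‖^2) := by
    simp only [mul_add, mul_sub, Finset.sum_add_distrib, Finset.sum_sub_distrib]
    have e1 : ∑ j, a j * Real.log ‖x‖ = 0 := by rw [← Finset.sum_mul, hsum, zero_mul]
    have e2 : ∑ j : Fin N, a j * ((inner ℝ x (y j) : ℝ)/‖x‖^2) = 0 := by
      have e3 : ∑ j : Fin N, a j * (inner ℝ x (y j) : ℝ) = (inner ℝ x (∑ j, a j • y j) : ℝ) := by
        rw [inner_sum]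
        refine Finset.sum_congr rfl (fun j _ => ?_)
        rw [real_inner_smul_right]
      have : ∑ j : Fin N, a j * ((inner ℝ x (y j) : ℝ)/‖x‖^2)
          = (∑ j : Fin N, a j * (inner ℝ x (y j) : ℝ))/‖x‖^2 := by
        rw [Finset.sum_div]
        exact Finset.sum_congr rfl (fun j _ => by ring)
      rw [this, e3, hmom, inner_zero_right, zero_div]
    rw [e1, e2]
    ring
  rw [hrw]
  calc |∑ j, a j * (Real.log ‖x - y j‖ - Real.log ‖x‖ + (inner ℝ x (y j) : ℝ)/‖x‖^2)|
      ≤ ∑ j, |a j * (Real.log ‖x - y j‖ - Real.log ‖x‖ + (inner ℝ x (y j) : ℝ)/‖x‖^2)| :=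
        Finset.abs_sum_le_sum_abs _ _
    _ ≤ ∑ j, |a j| * (10*(‖y j‖+1)^2/‖x‖^2) := by
        refine Finset.sum_le_sum (fun j _ => ?_)
        rw [abs_mul]
        exact mul_le_mul_of_nonneg_left (taylor_log x (y j) (hxj j)) (abs_nonneg _)
    _ = (∑ j, |a j| * (10*(‖y j‖+1)^2)) / ‖x‖^2 := by
        rw [Finset.sum_div]
        exact Finset.sum_congr rfl (fun j _ => by ring)

/-- If the `y_j` are distinct, `Σ a_j = 0` and `Σ a_j y_j = 0`,
then `ψ(x) = -(2π)⁻¹ Σ a_j log|x - y_j|` belongs to `L²(ℝ²)` and decays like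
`|x|⁻²` at infinity. -/
theorem stmt_10 (N : ℕ) (hN : 1 ≤ N)
    (y : Fin N → EuclideanSpace ℝ (Fin 2)) (hy : Function.Injective y)
    (a : Fin N → ℝ)
    (hsum : ∑ j, a j = 0) (hmom : ∑ j, a j • y j = 0) :
    MemLp (fun x : EuclideanSpace ℝ (Fin 2) =>
        -(1/(2*Real.pi)) * ∑ j, a j * Real.log ‖x - y j‖) 2 volume ∧
    ∃ C > (0:ℝ), ∃ R > (0:ℝ), ∀ x : EuclideanSpace ℝ (Fin 2), R ≤ ‖x‖ →
      |(-(1/(2*Real.pi)) * ∑ j, a j * Real.log ‖x - y j‖)| ≤ C / ‖x‖^2 := by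
  set c : ℝ := -(1/(2*Real.pi)) with hc
  set R : ℝ := 1 + ∑ j, 6*‖y j‖ with hR
  set C0 : ℝ := ∑ j, |a j| * (10*(‖y j‖+1)^2) with hC0
  have hsumyn : (0:ℝ) ≤ ∑ j, 6*‖y j‖ := Finset.sum_nonneg (fun j _ => by positivity)
  have hR1 : 1 ≤ R := by rw [hR]; linarith
  have hR0 : 0 < R := by linarith
  have hC0n : 0 ≤ C0 := Finset.sum_nonneg (fun j _ => by positivity)
  have hcabs : |c| ≤ 1 := by
    rw [hc, abs_neg, abs_of_pos (by positivity : (0:ℝ) < 1/(2*Real.pi))]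
    rw [div_le_one (by positivity)]
    linarith [Real.pi_gt_three]
  -- the pointwise decay bound for the full function
  have hdecay : ∀ x : E2, R ≤ ‖x‖ →
      |c * ∑ j, a j * Real.log ‖x - y j‖| ≤ (C0 + 1) / ‖x‖^2 := by
    intro x hx
    have hx0 : 0 < ‖x‖ := lt_of_lt_of_le hR0 hx
    have h1 := sum_decay N y a hsum hmom x (hR ▸ hx)
    rw [abs_mul]
    calc |c| * |∑ j, a j * Real.log ‖x - y j‖|
        ≤ 1 * (C0 / ‖x‖^2) := by
          exact mul_le_mul hcabs h1 (abs_nonneg _) zero_le_one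
      _ = C0 / ‖x‖^2 := one_mul _
      _ ≤ (C0 + 1) / ‖x‖^2 := by gcongr; linarith
  -- measurability
  have hψm : Measurable (fun x : E2 => c * ∑ j, a j * Real.log ‖x - y j‖) := by
    apply Measurable.const_mul
    apply Finset.measurable_sum
    intro j _
    exact (Real.measurable_log.comp (continuous_norm.measurable.comp
      (continuous_id.sub continuous_const).measurable)).const_mul (a j)
  constructor
  · rw [memLp_two_iff_integrable_sq hψm.aestronglyMeasurable]
    rw [← integrableOn_univ, ← union_compl_self (closedBall (0:E2) R)]
    refine IntegrableOn.union ?_ ?_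
    · -- near part
      have hmem : MemLp (fun x : E2 => c * ∑ j, a j * Real.log ‖x - y j‖) 2
          (volume.restrict (closedBall (0:E2) R)) := by
        have hterm : ∀ j : Fin N, MemLp (fun x : E2 => a j * Real.log ‖x - y j‖) 2
            (volume.restrict (closedBall (0:E2) R)) := by
          intro j
          refine MemLp.const_mul ?_ (a j)
          have hms : AEStronglyMeasurable (fun x : E2 => Real.log ‖x - y j‖)
              (volume.restrict (closedBall (0:E2) R)) :=
            (Real.measurable_log.comp (continuous_norm.measurable.comp
              (continuous_id.sub continuous_const).measurable)).aestronglyMeasurable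
          rw [memLp_two_iff_integrable_sq hms]
          exact L2d_ball (y j) R
        have hsum' := memLp_finset_sum' Finset.univ (fun j _ => hterm j)
        have := hsum'.const_mul c
        simpa using this
      exact (memLp_two_iff_integrable_sq (hψm.aestronglyMeasurable.restrict)).1 hmem
    · -- far part
      refine Integrable.mono' (g := fun x : E2 => (16*(C0+1)^2) * (1+‖x‖) ^ (-(4:ℝ)))
        ?_ ((hψm.pow_const 2).aestronglyMeasurable.restrict) ?_
      · refine Integrable.integrableOn ?_
        refine Integrable.const_mul ?_ _
        apply integrable_one_add_norm (E := E2)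
        rw [finrank_euclideanSpace_fin]
        norm_num
      · refine (ae_restrict_iff' measurableSet_closedBall.compl).2
          (Filter.Eventually.of_forall ?_)
        intro x hx
        have hxR : R ≤ ‖x‖ := by
          simp only [mem_compl_iff, mem_closedBall, dist_zero_right, not_le] at hx
          exact hx.le
        have hx1 : 1 ≤ ‖x‖ := hR1.trans hxR
        have hx0 : 0 < ‖x‖ := by linarith
        have hb := hdecay x hxR
        have hsq : (c * ∑ j, a j * Real.log ‖x - y j‖)^2 ≤ (C0+1)^2/‖x‖^4 := by
          have h1 : (c * ∑ j, a j * Real.log ‖x - y j‖)^2 ≤ ((C0+1)/‖x‖^2)^2 := by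
            rw [← sq_abs]
            exact pow_le_pow_left₀ (abs_nonneg _) hb 2
          calc (c * ∑ j, a j * Real.log ‖x - y j‖)^2 ≤ ((C0+1)/‖x‖^2)^2 := h1
            _ = (C0+1)^2/‖x‖^4 := by rw [div_pow, ← pow_mul]
        have hr4 : (1+‖x‖) ^ (-4:ℝ) = 1/(1+‖x‖)^(4:ℕ) := by
          rw [Real.rpow_neg (by positivity), one_div]
          congr 1
          rw [← Real.rpow_natCast (1+‖x‖) 4]
          norm_num
        rw [Real.norm_eq_abs, abs_of_nonneg (sq_nonneg _)]
        beta_reduce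
        rw [hr4]
        have hpow : (1+‖x‖)^(4:ℕ) ≤ 16*‖x‖^(4:ℕ) := by
          have h2 : 1+‖x‖ ≤ 2*‖x‖ := by linarith
          calc (1+‖x‖)^(4:ℕ) ≤ (2*‖x‖)^(4:ℕ) := pow_le_pow_left₀ (by positivity) h2 4
            _ = 16*‖x‖^(4:ℕ) := by ring
        calc (c * ∑ j, a j * Real.log ‖x - y j‖)^2 ≤ (C0+1)^2/‖x‖^4 := hsq
          _ ≤ 16*(C0+1)^2 * (1/(1+‖x‖)^(4:ℕ)) := by
              rw [mul_one_div, div_le_div_iff₀ (by positivity) (by positivity)]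
              nlinarith [sq_nonneg (C0+1), hpow, pow_pos hx0 4]
  · exact ⟨C0 + 1, by linarith, R, hR0, hdecay⟩
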